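/- Let π be a d×d positive definite complex Hermitian matrix, let J_π be the superoperator J_π(ρ) = π^{1/2} ρ π^{1/2}, and let M and N be linear maps on d×d complex matrices such that Tr((M X)ᴴ Y) = Tr(Xᴴ (N Y)) for all X, Y (N is the Hilbert–Schmidt adjoint of M). If M ∘ J_π = J_π ∘ N, then M is self-adjoint with respect to the inner product induced by J_π^{-1}: for every Hermitian matrix A and every matrix B, Tr( Aᴴ · J_π^{-1}( M(B) ) ) = Tr( (M(A))ᴴ · J_π^{-1}( B ) ), where J_π^{-1}(ρ) = π^{-1/2} ρ π^{-1/2}. -/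

import Mathlib

open Matrix ComplexOrder

/-- The positive semidefinite square root of a positive semidefinite matrix
(the definition removed from Mathlib, restored with its old meaning). -/
noncomputable def Matrix.PosSemidef.sqrt {n : Type*} [Fintype n] [DecidableEq n] {𝕜 : Type*}
    [RCLike 𝕜] {A : Matrix n n 𝕜} (hA : A.PosSemidef) : Matrix n n 𝕜 :=
  hA.1.eigenvectorUnitary.1 * diagonal ((↑) ∘ (√·) ∘ hA.1.eigenvalues) *
    (star hA.1.eigenvectorUnitary : Matrix n n 𝕜)

lemma Matrix.PosSemidef.posSemidef_sqrt_isHermitian {n : Type*} [Fintype n] [DecidableEq n]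
    {𝕜 : Type*} [RCLike 𝕜] {A : Matrix n n 𝕜} (hA : A.PosSemidef) :
    (hA.sqrt)ᴴ = hA.sqrt := by
  rw [Matrix.PosSemidef.sqrt, conjTranspose_mul, conjTranspose_mul, diagonal_conjTranspose,
    mul_assoc, star_eq_conjTranspose, conjTranspose_conjTranspose, ← star_eq_conjTranspose]
  congr 2
  congr 1
  funext i
  simp

lemma Matrix.PosSemidef.sqrt_mul_self {n : Type*} [Fintype n] [DecidableEq n]
    {𝕜 : Type*} [RCLike 𝕜] {A : Matrix n n 𝕜} (hA : A.PosSemidef) :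
    hA.sqrt * hA.sqrt = A := by
  rw [Matrix.PosSemidef.sqrt]
  conv_rhs => rw [hA.1.spectral_theorem]
  have hU : (star hA.1.eigenvectorUnitary : Matrix n n 𝕜) * hA.1.eigenvectorUnitary.1 = 1 :=
    Unitary.coe_star_mul_self _
  rw [Unitary.conjStarAlgAut_apply]
  calc _ = hA.1.eigenvectorUnitary.1 * (diagonal ((↑) ∘ (√·) ∘ hA.1.eigenvalues) *
        ((star hA.1.eigenvectorUnitary : Matrix n n 𝕜) * hA.1.eigenvectorUnitary.1) *
        diagonal ((↑) ∘ (√·) ∘ hA.1.eigenvalues)) *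
        (star hA.1.eigenvectorUnitary : Matrix n n 𝕜) := by simp only [mul_assoc]
    _ = _ := by
      rw [hU, mul_one, diagonal_mul_diagonal]
      congr 3
      funext i
      simp only [Function.comp_apply]
      rw [← RCLike.ofReal_mul, Real.mul_self_sqrt (hA.eigenvalues_nonneg i)]

theorem quantum_detailed_balance_self_adjoint {d : ℕ}
    (π : Matrix (Fin d) (Fin d) ℂ) (hπ : π.PosDef)
    (M N : Matrix (Fin d) (Fin d) ℂ →ₗ[ℂ] Matrix (Fin d) (Fin d) ℂ)
    (hadj : ∀ X Y : Matrix (Fin d) (Fin d) ℂ,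
      ((M X)ᴴ * Y).trace = (Xᴴ * N Y).trace)
    (hdb : ∀ ρ : Matrix (Fin d) (Fin d) ℂ,
      M (hπ.posSemidef.sqrt * ρ * hπ.posSemidef.sqrt)
        = hπ.posSemidef.sqrt * N ρ * hπ.posSemidef.sqrt) :
    ∀ A B : Matrix (Fin d) (Fin d) ℂ, A.IsHermitian →
      (Aᴴ * ((hπ.posSemidef.sqrt)⁻¹ * M B * (hπ.posSemidef.sqrt)⁻¹)).trace
        = ((M A)ᴴ * ((hπ.posSemidef.sqrt)⁻¹ * B * (hπ.posSemidef.sqrt)⁻¹)).trace := by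
  intro A B hA
  set s := hπ.posSemidef.sqrt with hsdef
  have hsH : sᴴ = s := hπ.posSemidef.posSemidef_sqrt_isHermitian
  have hdet : IsUnit s.det := by
    have h : s.det * s.det = π.det := by
      rw [← det_mul, hπ.posSemidef.sqrt_mul_self]
    have hπd : π.det ≠ 0 := by
      have := hπ.det_pos
      exact_mod_cast ne_of_gt (by exact_mod_cast this)
    refine isUnit_iff_ne_zero.mpr fun h0 => hπd ?_
    rw [← h, h0, mul_zero]
  have hsi : s * s⁻¹ = 1 := mul_nonsing_inv s hdet
  have his : s⁻¹ * s = 1 := nonsing_inv_mul s hdet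
  have hsiH : (s⁻¹)ᴴ = s⁻¹ := by rw [conjTranspose_nonsing_inv, hsH]
  -- N (s⁻¹ A s⁻¹) = s⁻¹ (M A) s⁻¹
  have hN : N (s⁻¹ * A * s⁻¹) = s⁻¹ * M A * s⁻¹ := by
    have h1 := hdb (s⁻¹ * A * s⁻¹)
    have h2 : s * (s⁻¹ * A * s⁻¹) * s = A := by
      rw [← mul_assoc, ← mul_assoc, hsi, one_mul, mul_assoc, his, mul_one]
    rw [h2] at h1
    calc N (s⁻¹ * A * s⁻¹)
        = s⁻¹ * (s * N (s⁻¹ * A * s⁻¹) * s) * s⁻¹ := by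
          rw [← mul_assoc, ← mul_assoc, his, one_mul, mul_assoc, mul_assoc, hsi, mul_one]
      _ = s⁻¹ * M A * s⁻¹ := by rw [← h1]
  have key : ∀ X Y : Matrix (Fin d) (Fin d) ℂ, (Xᴴ * M Y).trace = ((N X)ᴴ * Y).trace := by
    intro X Y
    have := hadj Y X
    calc (Xᴴ * M Y).trace = star ((M Y)ᴴ * X).trace := by
          rw [← trace_conjTranspose, conjTranspose_mul, conjTranspose_conjTranspose]
      _ = star (Yᴴ * N X).trace := by rw [this]
      _ = ((N X)ᴴ * Y).trace := by
          rw [← trace_conjTranspose, conjTranspose_mul, conjTranspose_conjTranspose]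
  calc (Aᴴ * (s⁻¹ * M B * s⁻¹)).trace
      = ((s⁻¹ * A * s⁻¹)ᴴ * M B).trace := by
        rw [conjTranspose_mul, conjTranspose_mul, hsiH, hA.eq]
        rw [← mul_assoc, ← mul_assoc]
        rw [trace_mul_cycle]
    _ = ((N (s⁻¹ * A * s⁻¹))ᴴ * B).trace := key _ _
    _ = ((M A)ᴴ * (s⁻¹ * B * s⁻¹)).trace := by
        rw [hN, conjTranspose_mul, conjTranspose_mul, hsiH]
        rw [← mul_assoc, ← mul_assoc]
        simp only [← mul_assoc]
        rw [trace_mul_comm]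
        simp only [← mul_assoc]
        rw [trace_mul_comm]
        simp only [← mul_assoc]
        rw [trace_mul_comm]
        simp only [← mul_assoc]
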